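/- Let R be a commutative ring, S a multiplicative subset of R, M an R-module, and n ≥ 2 an integer. Then M is u-S-quasi-projective if and only if the n-fold direct sum M^(n) = M ⊕ M ⊕ ⋯ ⊕ M (n copies) is u-S-pseudo-projective. -/

import Mathlib

/-!  Definitions for uniformly-S-pseudo-projective modules
(M. Adarbeh, M. Saleh, "Uniformly-S-pseudo-projective modules"). -/

universe u v w

/-- `S` is a multiplicative subset of the commutative ring `R`:
`1 ∈ S`, `0 ∉ S`, and `S` is closed under multiplication. -/
def IsMultSubset {R : Type u} [CommRing R] (S : Set R) : Prop :=
  1 ∈ S ∧ (0 : R) ∉ S ∧ ∀ ⦃a b : R⦄, a ∈ S → b ∈ S → a * b ∈ S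

/-- An `R`-module `T` is `u`-`S`-torsion if some `s ∈ S` annihilates it. -/
def IsUSTorsion {R : Type u} [CommRing R] (S : Set R) (T : Type v) [AddCommGroup T]
    [Module R T] : Prop :=
  ∃ s ∈ S, ∀ t : T, s • t = 0

/-- `f` is a `u`-`S`-monomorphism: its kernel is `u`-`S`-torsion. -/
def IsUSMono {R : Type u} [CommRing R] (S : Set R) {M : Type v} {N : Type w}
    [AddCommGroup M] [Module R M] [AddCommGroup N] [Module R N] (f : M →ₗ[R] N) : Prop :=
  ∃ s ∈ S, ∀ m ∈ LinearMap.ker f, s • m = (0 : M)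

/-- `f` is a `u`-`S`-epimorphism: its cokernel is `u`-`S`-torsion. -/
def IsUSEpi {R : Type u} [CommRing R] (S : Set R) {M : Type v} {N : Type w}
    [AddCommGroup M] [Module R M] [AddCommGroup N] [Module R N] (f : M →ₗ[R] N) : Prop :=
  ∃ s ∈ S, ∀ n : N, s • n ∈ LinearMap.range f

/-- `f` is a `u`-`S`-isomorphism: both a `u`-`S`-monomorphism and a `u`-`S`-epimorphism. -/
def IsUSIso {R : Type u} [CommRing R] (S : Set R) {M : Type v} {N : Type w}
    [AddCommGroup M] [Module R M] [AddCommGroup N] [Module R N] (f : M →ₗ[R] N) : Prop :=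
  IsUSMono S f ∧ IsUSEpi S f

/-- `P` is `u`-`S`-pseudo-projective: for every submodule `K` of `P` there is `s ∈ S` such that
every `u`-`S`-epimorphism `f : P → P/K` satisfies `s • f = π_K ∘ g` for some endomorphism
`g` of `P`. -/
def IsUSPseudoProjective {R : Type u} [CommRing R] (S : Set R) (P : Type v)
    [AddCommGroup P] [Module R P] : Prop :=
  ∀ K : Submodule R P, ∃ s ∈ S, ∀ f : P →ₗ[R] P ⧸ K, IsUSEpi S f →
    ∃ g : P →ₗ[R] P, s • f = K.mkQ.comp g

/-- `M` is `u`-`S`-quasi-projective. -/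
def IsUSQuasiProjective {R : Type u} [CommRing R] (S : Set R) (M : Type v)
    [AddCommGroup M] [Module R M] : Prop :=
  ∀ K : Submodule R M, ∃ s ∈ S, ∀ f : M →ₗ[R] M ⧸ K,
    ∃ g : M →ₗ[R] M, s • f = K.mkQ.comp g

/-- `Q` is `u`-`S`-projective (test modules in `Type v₁`). -/
def IsUSProjective.{u₁, v₁, w₁} {R : Type u₁} [CommRing R] (S : Set R) (Q : Type w₁)
    [AddCommGroup Q] [Module R Q] : Prop :=
  ∀ (B C : Type v₁) [AddCommGroup B] [AddCommGroup C] [Module R B] [Module R C]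
    (g : B →ₗ[R] C), IsUSEpi S g →
      ∃ s ∈ S, ∀ h : Q →ₗ[R] C, ∃ h' : Q →ₗ[R] B, s • h = g.comp h'

/-- `M` is `u`-`S`-injective (test modules in `Type v₁`). -/
def IsUSInjective.{u₁, v₁, w₁} {R : Type u₁} [CommRing R] (S : Set R) (M : Type w₁)
    [AddCommGroup M] [Module R M] : Prop :=
  ∀ (A B : Type v₁) [AddCommGroup A] [AddCommGroup B] [Module R A] [Module R B]
    (f : A →ₗ[R] B), IsUSMono S f →
      ∃ s ∈ S, ∀ h : A →ₗ[R] M, ∃ h' : B →ₗ[R] M, s • h = h'.comp f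

/-- `E` is `u`-`S`-pseudo-injective. -/
def IsUSPseudoInjective {R : Type u} [CommRing R] (S : Set R) (E : Type v)
    [AddCommGroup E] [Module R E] : Prop :=
  ∀ K : Submodule R E, ∃ s ∈ S, ∀ f : ↥K →ₗ[R] E, IsUSMono S f →
    ∃ g : E →ₗ[R] E, g.comp K.subtype = s • f

/-- The sequence `0 → A →f B →g C → 0` is short `u`-`S`-exact. -/
def IsShortUSExact {R : Type u} [CommRing R] (S : Set R) {A B C : Type v}
    [AddCommGroup A] [Module R A] [AddCommGroup B] [Module R B] [AddCommGroup C] [Module R C]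
    (f : A →ₗ[R] B) (g : B →ₗ[R] C) : Prop :=
  IsUSMono S f ∧ IsUSEpi S g ∧
    ∃ s ∈ S, (∀ x ∈ LinearMap.ker g, s • x ∈ LinearMap.range f) ∧
      (∀ x ∈ LinearMap.range f, s • x ∈ LinearMap.ker g)

/-- The short `u`-`S`-exact sequence `0 → A →f B →g C → 0` is `u`-`S`-split:
some multiple `s • 1_A` of the identity factors back through `f`. -/
def IsUSSplitSeq {R : Type u} [CommRing R] (S : Set R) {A B : Type v}
    [AddCommGroup A] [Module R A] [AddCommGroup B] [Module R B] (f : A →ₗ[R] B) : Prop :=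
  ∃ s ∈ S, ∃ f' : B →ₗ[R] A, f'.comp f = s • (LinearMap.id : A →ₗ[R] A)

/-- `M` is a `u`-`S`-semisimple module (test sequences with modules in `Type v₁`). -/
def IsUSSemisimpleModule.{u₁, v₁} {R : Type u₁} [CommRing R] (S : Set R) (M : Type v₁)
    [AddCommGroup M] [Module R M] : Prop :=
  ∀ (A C : Type v₁) [AddCommGroup A] [AddCommGroup C] [Module R A] [Module R C]
    (f : A →ₗ[R] M) (g : M →ₗ[R] C), IsShortUSExact S f g → IsUSSplitSeq S f

/-- `R` is a `u`-`S`-semisimple ring: every free `R`-module is `u`-`S`-semisimple. -/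
def IsUSSemisimpleRing.{u₁, v₁} {R : Type u₁} [CommRing R] (S : Set R) : Prop :=
  ∀ (F : Type v₁) [AddCommGroup F] [Module R F], Module.Free R F →
    IsUSSemisimpleModule.{u₁, v₁} S F

/-- A submodule `N` of `M` is a `u`-`S`-direct summand of `M` if there is an `R`-module `N'`
and a `u`-`S`-isomorphism between `M` and `N ⊕ N'`. -/
def IsUSDirectSummand {R : Type u} [CommRing R] (S : Set R) {M : Type v}
    [AddCommGroup M] [Module R M] (N : Submodule R M) : Prop :=
  ∃ (N' : ModuleCat.{v} R) (h : M →ₗ[R] (↥N × ↥N')), IsUSIso S h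

/-- `A` is `u`-`S`-projective relative to `B`. -/
def IsUSProjectiveRel {R : Type u} [CommRing R] (S : Set R) (A : Type v) (B : Type w)
    [AddCommGroup A] [Module R A] [AddCommGroup B] [Module R B] : Prop :=
  ∀ K : Submodule R B, ∃ s ∈ S, ∀ f : A →ₗ[R] B ⧸ K,
    ∃ h : A →ₗ[R] B, s • f = K.mkQ.comp h


section USAuxSection
namespace USAux

variable {R : Type u} [CommRing R] {S : Set R}

lemma rel_congr {M N N' : Type v} [AddCommGroup M] [Module R M]
    [AddCommGroup N] [Module R N] [AddCommGroup N'] [Module R N']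
    (e : N ≃ₗ[R] N')
    (h : ∀ K : Submodule R N, ∃ s ∈ S, ∀ f : M →ₗ[R] N ⧸ K,
      ∃ g : M →ₗ[R] N, s • f = K.mkQ.comp g) :
    ∀ K' : Submodule R N', ∃ s ∈ S, ∀ f : M →ₗ[R] N' ⧸ K',
      ∃ g : M →ₗ[R] N', s • f = K'.mkQ.comp g := by
  intro K'
  obtain ⟨s, hs, hlift⟩ := h (K'.comap (e : N →ₗ[R] N'))
  have hmap : (K'.comap (e : N →ₗ[R] N')).map (e : N →ₗ[R] N') = K' := by
    ext x
    constructor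
    · rintro ⟨y, hy, rfl⟩; exact hy
    · intro hx; exact ⟨e.symm x, by simpa using hx, by simp⟩
  set K : Submodule R N := K'.comap (e : N →ₗ[R] N')
  let qe : (N ⧸ K) ≃ₗ[R] N' ⧸ K' := Submodule.Quotient.equiv K K' e hmap
  have hqe : ∀ x : N, qe (K.mkQ x) = K'.mkQ (e x) := fun x => rfl
  refine ⟨s, hs, fun f => ?_⟩
  obtain ⟨g, hg⟩ := hlift ((qe.symm : (N' ⧸ K') →ₗ[R] N ⧸ K).comp f)
  refine ⟨(e : N →ₗ[R] N').comp g, ?_⟩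
  ext m
  have h1 : s • qe.symm (f m) = K.mkQ (g m) := by
    simpa using LinearMap.congr_fun hg m
  have h2 := congrArg qe h1
  rw [map_smul, LinearEquiv.apply_symm_apply, hqe] at h2
  simpa using h2

lemma rel_prod (hSmul : ∀ ⦃a b : R⦄, a ∈ S → b ∈ S → a * b ∈ S) {M A B : Type v}
    [AddCommGroup M] [Module R M] [AddCommGroup A] [Module R A]
    [AddCommGroup B] [Module R B]
    (hA : ∀ K : Submodule R A, ∃ s ∈ S, ∀ f : M →ₗ[R] A ⧸ K,
      ∃ g : M →ₗ[R] A, s • f = K.mkQ.comp g)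
    (hB : ∀ K : Submodule R B, ∃ s ∈ S, ∀ f : M →ₗ[R] B ⧸ K,
      ∃ g : M →ₗ[R] B, s • f = K.mkQ.comp g) :
    ∀ K : Submodule R (A × B), ∃ s ∈ S, ∀ f : M →ₗ[R] (A × B) ⧸ K,
      ∃ g : M →ₗ[R] A × B, s • f = K.mkQ.comp g := by
  intro K
  set p : (A × B) →ₗ[R] (A × B) ⧸ K := K.mkQ with hp
  set β : B →ₗ[R] (A × B) ⧸ K := p.comp (LinearMap.inr R A B) with hβ
  set T : Submodule R ((A × B) ⧸ K) := LinearMap.range β with hT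
  set α : A →ₗ[R] ((A × B) ⧸ K) ⧸ T := T.mkQ.comp (p.comp (LinearMap.inl R A B)) with hα
  obtain ⟨s₁, hs₁, hl₁⟩ := hA (LinearMap.ker α)
  obtain ⟨s₂, hs₂, hl₂⟩ := hB (LinearMap.ker β)
  refine ⟨s₁ * s₂, hSmul hs₁ hs₂, fun f => ?_⟩
  have hαs : Function.Surjective α := by
    intro y
    obtain ⟨z, rfl⟩ := T.mkQ_surjective y
    obtain ⟨ab, rfl⟩ := K.mkQ_surjective z
    refine ⟨ab.1, ?_⟩
    have h1 : (ab.1, ab.2) = (ab.1, (0 : B)) + ((0 : A), ab.2) := by simp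
    have h2 : T.mkQ (p ((0 : A), ab.2)) = 0 := by
      rw [Submodule.mkQ_apply, Submodule.Quotient.mk_eq_zero]
      exact ⟨ab.2, rfl⟩
    calc α ab.1 = T.mkQ (p (ab.1, 0)) := rfl
      _ = T.mkQ (p (ab.1, 0)) + T.mkQ (p ((0:A), ab.2)) := by rw [h2, add_zero]
      _ = T.mkQ (K.mkQ ab) := by rw [← map_add, ← map_add, ← h1]
  let e₁ : (A ⧸ LinearMap.ker α) ≃ₗ[R] ((A × B) ⧸ K) ⧸ T :=
    α.quotKerEquivOfSurjective hαs
  have he₁ : ∀ a : A, e₁ ((LinearMap.ker α).mkQ a) = α a := fun a => rfl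
  obtain ⟨h₁, hh₁⟩ := hl₁ ((e₁.symm : (((A × B) ⧸ K) ⧸ T) →ₗ[R] _).comp (T.mkQ.comp f))
  have key1 : ∀ m : M, T.mkQ (s₁ • f m) = T.mkQ (p (h₁ m, 0)) := by
    intro m
    have h1 : s₁ • e₁.symm (T.mkQ (f m)) = (LinearMap.ker α).mkQ (h₁ m) := by
      simpa using LinearMap.congr_fun hh₁ m
    have h2 := congrArg e₁ h1
    rw [map_smul, LinearEquiv.apply_symm_apply, he₁] at h2
    rw [map_smul]
    exact h2
  set f₂' : M →ₗ[R] (A × B) ⧸ K :=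
    s₁ • f - p.comp ((LinearMap.inl R A B).comp h₁) with hf₂'
  have hmem : ∀ m : M, f₂' m ∈ T := by
    intro m
    have hz : T.mkQ (f₂' m) = 0 := by
      simp only [hf₂', LinearMap.sub_apply, map_sub, LinearMap.smul_apply,
        LinearMap.coe_comp, Function.comp_apply]
      rw [sub_eq_zero]
      exact key1 m
    rw [Submodule.mkQ_apply, Submodule.Quotient.mk_eq_zero] at hz
    exact hz
  let e₂ : (B ⧸ LinearMap.ker β) ≃ₗ[R] T := β.quotKerEquivRange
  obtain ⟨h₂, hh₂⟩ := hl₂ ((e₂.symm : T →ₗ[R] _).comp (f₂'.codRestrict T hmem))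
  have key2 : ∀ m : M, s₂ • f₂' m = β (h₂ m) := by
    intro m
    have h1 : s₂ • e₂.symm ⟨f₂' m, hmem m⟩ = (LinearMap.ker β).mkQ (h₂ m) := by
      simpa [LinearMap.codRestrict] using LinearMap.congr_fun hh₂ m
    have h2 := congrArg (fun z => (e₂ z : (A × B) ⧸ K)) h1
    simp only [map_smul, LinearEquiv.apply_symm_apply] at h2
    have h3 : ((e₂ ((LinearMap.ker β).mkQ (h₂ m)) : T) : (A × B) ⧸ K) = β (h₂ m) := rfl
    rw [h3] at h2
    simpa using h2
  refine ⟨(LinearMap.inr R A B).comp h₂ + (LinearMap.inl R A B).comp (s₂ • h₁), ?_⟩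
  ext m
  simp only [LinearMap.smul_apply, LinearMap.coe_comp, Function.comp_apply,
    LinearMap.add_apply, map_add]
  have hinl : p ((LinearMap.inl R A B) (s₂ • h₁ m)) =
      s₂ • p ((LinearMap.inl R A B) (h₁ m)) := by
    rw [show (LinearMap.inl R A B) (s₂ • h₁ m) = s₂ • (LinearMap.inl R A B) (h₁ m) from
      map_smul _ _ _, map_smul]
  have key2' : ∀ m : M, s₂ • f₂' m = p ((LinearMap.inr R A B) (h₂ m)) := key2
  rw [hinl, ← key2' m]
  have hx : f₂' m = s₁ • f m - p ((LinearMap.inl R A B) (h₁ m)) := rfl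
  rw [hx, smul_sub, mul_comm, mul_smul]
  abel

/-- `Fin.cons` as a linear equivalence. -/
def consLinearEquiv (R : Type u) [CommRing R] (M : Type v) [AddCommGroup M] [Module R M]
    (k : ℕ) : (M × (Fin k → M)) ≃ₗ[R] (Fin (k + 1) → M) where
  toFun x := Fin.cons x.1 x.2
  invFun y := (y 0, Fin.tail y)
  map_add' x y := by
    ext i
    refine Fin.cases ?_ (fun j => ?_) i <;> simp
  map_smul' c x := by
    ext i
    refine Fin.cases ?_ (fun j => ?_) i <;> simp
  left_inv x := by simp [Fin.tail_cons]
  right_inv y := by simp [Fin.cons_self_tail]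

lemma rel_pi_source {M N : Type v} [AddCommGroup M] [Module R M]
    [AddCommGroup N] [Module R N] (n : ℕ)
    (h : ∀ K : Submodule R N, ∃ s ∈ S, ∀ f : M →ₗ[R] N ⧸ K,
      ∃ g : M →ₗ[R] N, s • f = K.mkQ.comp g) :
    ∀ K : Submodule R N, ∃ s ∈ S, ∀ f : (Fin n → M) →ₗ[R] N ⧸ K,
      ∃ g : (Fin n → M) →ₗ[R] N, s • f = K.mkQ.comp g := by
  intro K
  obtain ⟨s, hs, hl⟩ := h K
  refine ⟨s, hs, fun f => ?_⟩
  choose g hg using fun i : Fin n =>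
    hl (f.comp (LinearMap.single R (fun _ : Fin n => M) i))
  refine ⟨∑ i, (g i).comp (LinearMap.proj i), LinearMap.ext fun x => ?_⟩
  have hx : x = ∑ i, Pi.single i (x i) := (Finset.univ_sum_single x).symm
  calc (s • f) x = s • f (∑ i, Pi.single i (x i)) := by rw [← hx]; rfl
    _ = ∑ i, s • f (Pi.single i (x i)) := by rw [map_sum, Finset.smul_sum]
    _ = ∑ i, K.mkQ (g i (x i)) := by
        refine Finset.sum_congr rfl fun i _ => ?_
        have := LinearMap.congr_fun (hg i) (x i)
        simpa using this
    _ = K.mkQ ((∑ i, (g i).comp (LinearMap.proj i)) x) := by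
        rw [← map_sum]
        congr 1
        simp [LinearMap.sum_apply]
  
lemma rel_pi_target (h1 : (1 : R) ∈ S)
    (hSmul : ∀ ⦃a b : R⦄, a ∈ S → b ∈ S → a * b ∈ S)
    {M : Type v} [AddCommGroup M] [Module R M]
    (h : ∀ K : Submodule R M, ∃ s ∈ S, ∀ f : M →ₗ[R] M ⧸ K,
      ∃ g : M →ₗ[R] M, s • f = K.mkQ.comp g) (n : ℕ) :
    ∀ K : Submodule R (Fin n → M), ∃ s ∈ S, ∀ f : M →ₗ[R] (Fin n → M) ⧸ K,
      ∃ g : M →ₗ[R] (Fin n → M), s • f = K.mkQ.comp g := by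
  induction n with
  | zero =>
    intro K
    haveI : Subsingleton (Fin 0 → M) := ⟨fun a b => funext fun i => i.elim0⟩
    haveI : Subsingleton ((Fin 0 → M) ⧸ K) := K.mkQ_surjective.subsingleton
    exact ⟨1, h1, fun f => ⟨0, by ext m; exact Subsingleton.elim _ _⟩⟩
  | succ k ih =>
    exact rel_congr (consLinearEquiv R M k) (rel_prod hSmul h ih)

end USAux

end USAuxSection

/-- For `n ≥ 2`, `M` is `u`-`S`-quasi-projective if and only if the `n`-fold direct sum
`M ⊕ ⋯ ⊕ M` is `u`-`S`-pseudo-projective. -/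

theorem uSQuasiProjective_iff_pow_uSPseudoProjective
    {R : Type u} [CommRing R] (S : Set R) (hS : IsMultSubset S)
    {M : Type v} [AddCommGroup M] [Module R M] (n : ℕ) (hn : 2 ≤ n) :
    IsUSQuasiProjective S M ↔ IsUSPseudoProjective S (Fin n → M) := by
  constructor
  · -- quasi-projective implies the power is pseudo-projective
    intro hM
    have h1 : ∀ K : Submodule R (Fin n → M), ∃ s ∈ S, ∀ f : M →ₗ[R] (Fin n → M) ⧸ K,
        ∃ g : M →ₗ[R] (Fin n → M), s • f = K.mkQ.comp g :=
      USAux.rel_pi_target hS.1 hS.2.2 hM n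
    have h2 := USAux.rel_pi_source (S := S) (n := n) h1
    intro K
    obtain ⟨s, hs, hl⟩ := h2 K
    exact ⟨s, hs, fun f _ => hl f⟩
  · -- the power is pseudo-projective implies quasi-projective
    intro hP K
    let i0 : Fin n := ⟨0, by omega⟩
    let i1 : Fin n := ⟨1, by omega⟩
    have h01 : i1 ≠ i0 := by simp [i0, i1, Fin.ext_iff]
    let q : (Fin n → M) →ₗ[R] M ⧸ K := K.mkQ.comp (LinearMap.proj i0)
    have hqs : Function.Surjective q := by
      intro y
      obtain ⟨m, rfl⟩ := K.mkQ_surjective y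
      exact ⟨Pi.single i0 m, by simp [q]⟩
    obtain ⟨s, hs, hl⟩ := hP (LinearMap.ker q)
    set K' : Submodule R (Fin n → M) := LinearMap.ker q with hK'
    let e : ((Fin n → M) ⧸ K') ≃ₗ[R] M ⧸ K := q.quotKerEquivOfSurjective hqs
    have he : ∀ x : Fin n → M, e (K'.mkQ x) = q x := fun x => rfl
    refine ⟨s, hs, fun f => ?_⟩
    let F : (Fin n → M) →ₗ[R] (Fin n → M) ⧸ K' :=
      (e.symm : (M ⧸ K) →ₗ[R] ((Fin n → M) ⧸ K')).comp
        (f.comp (LinearMap.proj i0) + K.mkQ.comp (LinearMap.proj i1))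
    have hF : IsUSEpi S F := by
      refine ⟨1, hS.1, fun y => ?_⟩
      obtain ⟨m, hm⟩ := K.mkQ_surjective (e y)
      refine ⟨Pi.single i1 m, ?_⟩
      have hval : F (Pi.single i1 m) = e.symm (K.mkQ m) := by
        simp [F, Pi.single_eq_of_ne h01.symm, Pi.single_eq_same]
      rw [hval, hm, LinearEquiv.symm_apply_apply, one_smul]
    obtain ⟨G, hG⟩ := hl F hF
    refine ⟨(LinearMap.proj i0).comp
      (G.comp (LinearMap.single R (fun _ : Fin n => M) i0)), ?_⟩
    ext m
    have h1 := LinearMap.congr_fun hG (Pi.single i0 m)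
    have hFv : F (Pi.single i0 m) = e.symm (f m) := by
      simp [F, Pi.single_eq_same, Pi.single_eq_of_ne h01]
    rw [LinearMap.smul_apply, hFv, LinearMap.coe_comp, Function.comp_apply] at h1
    have h2 := congrArg e h1
    rw [map_smul, LinearEquiv.apply_symm_apply, he] at h2
    simpa [q] using h2
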